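/- Let N ≥ 1 be an integer and let ξ : ℤ² → {0,1,2} be a configuration with card S_0(ξ) = K0 and card S_{e1}(ξ) = K1 ≤ N. Let C1(ξ) be the largest connected component of B_{e1} \ S_{e1}(ξ), let C0(ξ) be the connected component of (B_0 ∪ B_{e1}) \ (S_0(ξ) ∪ S_{e1}(ξ)) containing C1(ξ), and let B_0(ξ) = {x ∈ B_0 ∪ B_{e1} : ξ(x) = 2 and x is adjacent to some point of C0(ξ)}. Then card B_0(ξ) ≥ √K0. -/

import Mathlib

open Set

/-- Nearest-neighbor adjacency on ℤ². -/
def adjZ2 (x y : ℤ × ℤ) : Prop := |x.1 - y.1| + |x.2 - y.2| = 1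

/-- The box B_z = 2Nz + {−N, …, N−1}². -/
def box (N : ℕ) (z : ℤ × ℤ) : Set (ℤ × ℤ) :=
  {x | 2 * (N : ℤ) * z.1 - N ≤ x.1 ∧ x.1 ≤ 2 * (N : ℤ) * z.1 + N - 1 ∧
       2 * (N : ℤ) * z.2 - N ≤ x.2 ∧ x.2 ≤ 2 * (N : ℤ) * z.2 + N - 1}

/-- `y` is reachable from `x` by a path of adjacent points lying in `A`. -/
def reachIn (A : Set (ℤ × ℤ)) (x y : ℤ × ℤ) : Prop :=
  x ∈ A ∧ Relation.ReflTransGen (fun a b => a ∈ A ∧ b ∈ A ∧ adjZ2 a b) x y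

/-- `C` is a connected component of `A` (a maximal connected subset of `A`),
i.e. the set of points of `A` reachable within `A` from some point of `A`. -/
def IsComponent (A C : Set (ℤ × ℤ)) : Prop :=
  ∃ x ∈ A, C = {y | reachIn A x y}

lemma adjZ2_symm {x y : ℤ × ℤ} (h : adjZ2 x y) : adjZ2 y x := by
  unfold adjZ2 at *
  rw [abs_sub_comm y.1 x.1, abs_sub_comm y.2 x.2]
  exact h

lemma adjZ2_horiz {a b i : ℤ} (h : a - b = 1 ∨ b - a = 1) : adjZ2 (a, i) (b, i) := by
  unfold adjZ2
  simp only
  rw [sub_self, abs_zero, add_zero]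
  rcases h with h | h
  · rw [h]; exact abs_one
  · rw [show a - b = (-1 : ℤ) by omega]; simp

lemma adjZ2_vert {a b i : ℤ} (h : a - b = 1 ∨ b - a = 1) : adjZ2 (i, a) (i, b) := by
  unfold adjZ2
  simp only
  rw [sub_self, abs_zero, zero_add]
  rcases h with h | h
  · rw [h]; exact abs_one
  · rw [show a - b = (-1 : ℤ) by omega]; simp

lemma reach_mem {A : Set (ℤ × ℤ)} {x y : ℤ × ℤ} (h : reachIn A x y) : y ∈ A := by
  obtain ⟨hx, hr⟩ := h
  induction hr with
  | refl => exact hx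
  | tail _ h2 _ => exact h2.2.1

lemma reach_refl {A : Set (ℤ × ℤ)} {x : ℤ × ℤ} (hx : x ∈ A) : reachIn A x x :=
  ⟨hx, Relation.ReflTransGen.refl⟩

lemma reach_trans {A : Set (ℤ × ℤ)} {x y z : ℤ × ℤ} (h1 : reachIn A x y)
    (h2 : reachIn A y z) : reachIn A x z :=
  ⟨h1.1, h1.2.trans h2.2⟩

lemma reach_symm {A : Set (ℤ × ℤ)} {x y : ℤ × ℤ} (h : reachIn A x y) : reachIn A y x :=
  ⟨reach_mem h, (@Relation.ReflTransGen.stdSymm _ _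
    ⟨fun a b hab => ⟨hab.2.1, hab.1, adjZ2_symm hab.2.2⟩⟩).symm _ _ h.2⟩

lemma reach_step {A : Set (ℤ × ℤ)} {x y z : ℤ × ℤ} (h : reachIn A x y) (hz : z ∈ A)
    (hadj : adjZ2 y z) : reachIn A x z :=
  ⟨h.1, h.2.tail ⟨reach_mem h, hz, hadj⟩⟩

lemma comp_subset {A C : Set (ℤ × ℤ)} (h : IsComponent A C) : C ⊆ A := by
  obtain ⟨x, hx, rfl⟩ := h
  exact fun y hy => reach_mem hy

lemma comp_eq {A C C' : Set (ℤ × ℤ)} (h : IsComponent A C) (h' : IsComponent A C')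
    {z : ℤ × ℤ} (hz : z ∈ C) (hz' : z ∈ C') : C = C' := by
  obtain ⟨x, hx, rfl⟩ := h
  obtain ⟨x', hx', rfl⟩ := h'
  ext w
  constructor
  · intro hw
    exact reach_trans (reach_trans hz' (reach_symm hz)) hw
  · intro hw
    exact reach_trans (reach_trans hz (reach_symm hz')) hw

lemma reach_right {A : Set (ℤ × ℤ)} {i : ℤ} (a : ℤ) (n : ℕ)
    (h : ∀ k : ℕ, k ≤ n → (a + (k : ℤ), i) ∈ A) : reachIn A (a, i) (a + (n : ℤ), i) := by
  induction n with
  | zero => simpa using reach_refl (by simpa using h 0 le_rfl)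
  | succ k ih =>
    have h1 := ih (fun m hm => h m (le_trans hm (Nat.le_succ k)))
    have h2 : (a + ((k + 1 : ℕ) : ℤ), i) ∈ A := h (k + 1) le_rfl
    exact reach_step h1 h2 (adjZ2_horiz (by push_cast; omega))

lemma reach_up {A : Set (ℤ × ℤ)} {i : ℤ} (a : ℤ) (n : ℕ)
    (h : ∀ k : ℕ, k ≤ n → (i, a + (k : ℤ)) ∈ A) : reachIn A (i, a) (i, a + (n : ℤ)) := by
  induction n with
  | zero => simpa using reach_refl (by simpa using h 0 le_rfl)
  | succ k ih =>
    have h1 := ih (fun m hm => h m (le_trans hm (Nat.le_succ k)))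
    have h2 : (i, a + ((k + 1 : ℕ) : ℤ)) ∈ A := h (k + 1) le_rfl
    exact reach_step h1 h2 (adjZ2_vert (by push_cast; omega))

lemma reach_horiz {A : Set (ℤ × ℤ)} {i : ℤ} (a b : ℤ)
    (h : ∀ t, min a b ≤ t → t ≤ max a b → (t, i) ∈ A) : reachIn A (a, i) (b, i) := by
  rcases le_total a b with hab | hab
  · have := reach_right (A := A) (i := i) a (b - a).toNat
      (fun k hk => h (a + k) (by omega) (by omega))
    rwa [show a + ((b - a).toNat : ℤ) = b by omega] at this
  · have := reach_right (A := A) (i := i) b (a - b).toNat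
      (fun k hk => h (b + k) (by omega) (by omega))
    rw [show b + ((a - b).toNat : ℤ) = a by omega] at this
    exact reach_symm this

lemma reach_vert {A : Set (ℤ × ℤ)} {i : ℤ} (a b : ℤ)
    (h : ∀ t, min a b ≤ t → t ≤ max a b → (i, t) ∈ A) : reachIn A (i, a) (i, b) := by
  rcases le_total a b with hab | hab
  · have := reach_up (A := A) (i := i) a (b - a).toNat
      (fun k hk => h (a + k) (by omega) (by omega))
    rwa [show a + ((b - a).toNat : ℤ) = b by omega] at this
  · have := reach_up (A := A) (i := i) b (a - b).toNat
      (fun k hk => h (b + k) (by omega) (by omega))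
    rw [show b + ((a - b).toNat : ℤ) = a by omega] at this
    exact reach_symm this

lemma ncard_prodZ (s t : Set ℤ) : (s ×ˢ t).ncard = s.ncard * t.ncard := by
  rw [← Nat.card_coe_set_eq, ← Nat.card_coe_set_eq, ← Nat.card_coe_set_eq,
    ← Nat.card_prod]
  exact Nat.card_congr (Equiv.Set.prod s t)

lemma ncard_IccZ (a b : ℤ) : (Set.Icc a b).ncard = (b + 1 - a).toNat := by
  rw [← Finset.coe_Icc, Set.ncard_coe_finset, Int.card_Icc]

/-- Second part of the geometry lemma: if card S₀(ξ) = K₀ and card S_{e₁}(ξ) = K₁ ≤ N,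
then the number of symbionts adjacent to the component C₀(ξ) of
(B₀ ∪ B_{e₁}) \ (S₀(ξ) ∪ S_{e₁}(ξ)) containing the largest component C₁(ξ) of
B_{e₁} \ S_{e₁}(ξ) is at least √K₀. -/
theorem boundary_symbionts_card_lower_bound
    (N : ℕ) (hN : 1 ≤ N) (ξ : ℤ × ℤ → Fin 3) (K0 K1 : ℕ)
    (hK0 : ({x ∈ box N (0, 0) | ξ x = 2}).ncard = K0)
    (hK1 : ({x ∈ box N (1, 0) | ξ x = 2}).ncard = K1) (hK1N : K1 ≤ N)
    (C1 : Set (ℤ × ℤ))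
    (hC1 : IsComponent (box N (1, 0) \ {x | ξ x = 2}) C1)
    (hC1max : ∀ C', IsComponent (box N (1, 0) \ {x | ξ x = 2}) C' → C'.ncard ≤ C1.ncard)
    (C0 : Set (ℤ × ℤ))
    (hC0 : IsComponent ((box N (0, 0) ∪ box N (1, 0)) \ {x | ξ x = 2}) C0)
    (hC1C0 : C1 ⊆ C0) :
    Real.sqrt K0 ≤
      (({x ∈ box N (0, 0) ∪ box N (1, 0) | ξ x = 2 ∧ ∃ y ∈ C0, adjZ2 x y}).ncard : ℝ) := by
  classical
  have mem_box0 : ∀ p : ℤ × ℤ, p ∈ box N (0, 0) ↔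
      -(N : ℤ) ≤ p.1 ∧ p.1 ≤ (N : ℤ) - 1 ∧ -(N : ℤ) ≤ p.2 ∧ p.2 ≤ (N : ℤ) - 1 := by
    intro p; simp only [box, Set.mem_setOf_eq]; omega
  have mem_box1 : ∀ p : ℤ × ℤ, p ∈ box N (1, 0) ↔
      (N : ℤ) ≤ p.1 ∧ p.1 ≤ 3 * (N : ℤ) - 1 ∧ -(N : ℤ) ≤ p.2 ∧ p.2 ≤ (N : ℤ) - 1 := by
    intro p; simp only [box, Set.mem_setOf_eq]; omega
  have hbox0eq : box N (0, 0) = Set.Icc (-(N : ℤ)) ((N : ℤ) - 1) ×ˢ Set.Icc (-(N : ℤ)) ((N : ℤ) - 1) := by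
    ext p
    rw [mem_box0, Set.mem_prod, Set.mem_Icc, Set.mem_Icc]
    omega
  have hbox1eq : box N (1, 0) = Set.Icc ((N : ℤ)) (3 * (N : ℤ) - 1) ×ˢ Set.Icc (-(N : ℤ)) ((N : ℤ) - 1) := by
    ext p
    rw [mem_box1, Set.mem_prod, Set.mem_Icc, Set.mem_Icc]
    omega
  have hfin0 : (box N (0, 0)).Finite := by
    rw [hbox0eq]; exact (Set.finite_Icc _ _).prod (Set.finite_Icc _ _)
  have hfin1 : (box N (1, 0)).Finite := by
    rw [hbox1eq]; exact (Set.finite_Icc _ _).prod (Set.finite_Icc _ _)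
  have hfinU : (box N (0, 0) ∪ box N (1, 0)).Finite := hfin0.union hfin1
  have hbox1card : (box N (1, 0)).ncard = 4 * N * N := by
    rw [hbox1eq, ncard_prodZ, ncard_IccZ, ncard_IccZ,
      show (3 * (N : ℤ) - 1 + 1 - N).toNat = 2 * N by omega,
      show ((N : ℤ) - 1 + 1 - -(N : ℤ)).toNat = 2 * N by omega]
    ring
  set Sset : Set (ℤ × ℤ) := {x | ξ x = 2} with hSsetdef
  set A1 : Set (ℤ × ℤ) := box N (1, 0) \ Sset with hA1def
  obtain ⟨x0, hx0A, hC0eq⟩ := hC0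
  have hC0subA : C0 ⊆ (box N (0, 0) ∪ box N (1, 0)) \ Sset := by
    rw [hC0eq]; exact fun y hy => reach_mem hy
  -- free columns and free rows of B₁
  set FC : Set ℤ := {a ∈ Set.Icc ((N : ℤ)) (3 * (N : ℤ) - 1) |
    ∀ i ∈ Set.Icc (-(N : ℤ)) ((N : ℤ) - 1), (a, i) ∉ Sset} with hFCdef
  set FR : Set ℤ := {d ∈ Set.Icc (-(N : ℤ)) ((N : ℤ) - 1) |
    ∀ a ∈ Set.Icc ((N : ℤ)) (3 * (N : ℤ) - 1), (a, d) ∉ Sset} with hFRdef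
  have hS1fin : ({x ∈ box N (1, 0) | ξ x = 2}).Finite := hfin1.subset (Set.sep_subset _ _)
  have hFCsub : FC ⊆ Set.Icc ((N : ℤ)) (3 * (N : ℤ) - 1) := Set.sep_subset _ _
  have hFRsub : FR ⊆ Set.Icc (-(N : ℤ)) ((N : ℤ) - 1) := Set.sep_subset _ _
  have hFCfin : FC.Finite := (Set.finite_Icc _ _).subset hFCsub
  have hFRfin : FR.Finite := (Set.finite_Icc _ _).subset hFRsub
  -- number of non-free columns is at most K1
  have hS1finT := hS1fin.to_subtype
  have hnfC : (Set.Icc ((N : ℤ)) (3 * (N : ℤ) - 1) \ FC).ncard ≤ K1 := by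
    rw [← hK1]
    apply Set.ncard_le_ncard_of_injOn
      (fun a => (a, if h : ∃ i ∈ Set.Icc (-(N : ℤ)) ((N : ℤ) - 1), (a, i) ∈ Sset
        then h.choose else 0))
    · intro a ha
      obtain ⟨haI, haF⟩ := ha
      have hex : ∃ i ∈ Set.Icc (-(N : ℤ)) ((N : ℤ) - 1), (a, i) ∈ Sset := by
        by_contra hno
        push_neg at hno
        exact haF ⟨haI, fun i hi => hno i hi⟩
      rw [dif_pos hex]
      obtain ⟨hi, hs⟩ := hex.choose_spec
      rw [Set.mem_Icc] at haI hi
      exact ⟨(mem_box1 _).2 ⟨haI.1, haI.2, hi.1, hi.2⟩, hs⟩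
    · intro a _ b _ hab
      simpa using congrArg Prod.fst hab
  have hnfR : (Set.Icc (-(N : ℤ)) ((N : ℤ) - 1) \ FR).ncard ≤ K1 := by
    rw [← hK1]
    apply Set.ncard_le_ncard_of_injOn
      (fun d => ((if h : ∃ a ∈ Set.Icc ((N : ℤ)) (3 * (N : ℤ) - 1), (a, d) ∈ Sset
        then h.choose else 0), d))
    · intro d hd
      obtain ⟨hdI, hdF⟩ := hd
      have hex : ∃ a ∈ Set.Icc ((N : ℤ)) (3 * (N : ℤ) - 1), (a, d) ∈ Sset := by
        by_contra hno
        push_neg at hno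
        exact hdF ⟨hdI, fun a ha => hno a ha⟩
      rw [dif_pos hex]
      obtain ⟨ha, hs⟩ := hex.choose_spec
      rw [Set.mem_Icc] at hdI ha
      exact ⟨(mem_box1 _).2 ⟨ha.1, ha.2, hdI.1, hdI.2⟩, hs⟩
    · intro a _ b _ hab
      simpa using congrArg Prod.snd hab
  have hIccCcard : (Set.Icc ((N : ℤ)) (3 * (N : ℤ) - 1)).ncard = 2 * N := by
    rw [ncard_IccZ]; omega
  have hIccRcard : (Set.Icc (-(N : ℤ)) ((N : ℤ) - 1)).ncard = 2 * N := by
    rw [ncard_IccZ]; omega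
  have hFCcard : N ≤ FC.ncard := by
    have hu : Set.Icc ((N : ℤ)) (3 * (N : ℤ) - 1) =
        FC ∪ (Set.Icc ((N : ℤ)) (3 * (N : ℤ) - 1) \ FC) :=
      (Set.union_diff_cancel hFCsub).symm
    have := Set.ncard_union_le FC (Set.Icc ((N : ℤ)) (3 * (N : ℤ) - 1) \ FC)
    rw [← hu, hIccCcard] at this
    omega
  have hFRcard : N ≤ FR.ncard := by
    have hu : Set.Icc (-(N : ℤ)) ((N : ℤ) - 1) =
        FR ∪ (Set.Icc (-(N : ℤ)) ((N : ℤ) - 1) \ FR) :=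
      (Set.union_diff_cancel hFRsub).symm
    have := Set.ncard_union_le FR (Set.Icc (-(N : ℤ)) ((N : ℤ) - 1) \ FR)
    rw [← hu, hIccRcard] at this
    omega
  obtain ⟨c0, hc0⟩ : FC.Nonempty := by
    apply Set.nonempty_of_ncard_ne_zero; omega
  obtain ⟨d0, hd0⟩ : FR.Nonempty := by
    apply Set.nonempty_of_ncard_ne_zero; omega
  have hc0I := Set.mem_Icc.1 (hFCsub hc0)
  have hd0I := Set.mem_Icc.1 (hFRsub hd0)
  -- the component W of A1 containing the free rows/columns
  have hbase : (c0, d0) ∈ A1 :=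
    ⟨(mem_box1 _).2 ⟨hc0I.1, hc0I.2, hd0I.1, hd0I.2⟩, hc0.2 d0 (hFRsub hd0)⟩
  set W : Set (ℤ × ℤ) := {y | reachIn A1 (c0, d0) y} with hWdef
  have hWcomp : IsComponent A1 W := ⟨(c0, d0), hbase, rfl⟩
  -- every point of a free row of B₁ is in A1
  have hrowA1 : ∀ t, (N : ℤ) ≤ t → t ≤ 3 * (N : ℤ) - 1 → (t, d0) ∈ A1 := by
    intro t h1 h2
    exact ⟨(mem_box1 _).2 ⟨h1, h2, hd0I.1, hd0I.2⟩, hd0.2 t (Set.mem_Icc.2 ⟨h1, h2⟩)⟩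
  have hT1W : ∀ a ∈ FC, ∀ i, -(N : ℤ) ≤ i → i ≤ (N : ℤ) - 1 → (a, i) ∈ W := by
    intro a ha i h1 h2
    have haI := Set.mem_Icc.1 (hFCsub ha)
    have hreach1 : reachIn A1 (c0, d0) (a, d0) := by
      apply reach_horiz
      intro t ht1 ht2
      exact hrowA1 t (by omega) (by omega)
    have hreach2 : reachIn A1 (a, d0) (a, i) := by
      apply reach_vert
      intro t ht1 ht2
      refine ⟨(mem_box1 _).2 ⟨haI.1, haI.2, by omega, by omega⟩, ?_⟩
      exact ha.2 t (Set.mem_Icc.2 ⟨by omega, by omega⟩)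
    exact reach_trans hreach1 hreach2
  have hT1sub : FC ×ˢ Set.Icc (-(N : ℤ)) ((N : ℤ) - 1) ⊆ W := by
    rintro ⟨a, i⟩ ⟨ha, hi⟩
    rw [Set.mem_Icc] at hi
    exact hT1W a ha i hi.1 hi.2
  have hA1fin : A1.Finite := hfin1.subset Set.diff_subset
  have hWfin : W.Finite := hA1fin.subset (comp_subset hWcomp)
  have hT1card : (FC ×ˢ Set.Icc (-(N : ℤ)) ((N : ℤ) - 1)).ncard = FC.ncard * (2 * N) := by
    rw [ncard_prodZ, hIccRcard]
  -- W is big: more than half of B₁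
  have hWbig : 2 * (N * N) < W.ncard := by
    have hbase1 := Set.ncard_le_ncard hT1sub hWfin
    rw [hT1card] at hbase1
    rcases le_or_gt (N + 1) FC.ncard with hf | hf
    · have : (N + 1) * (2 * N) ≤ FC.ncard * (2 * N) := Nat.mul_le_mul_right _ hf
      nlinarith
    · -- FC.ncard = N; pick a non-free column a1 and add the point (a1, d0)
      have hFCN : FC.ncard = N := le_antisymm (by omega) hFCcard
      obtain ⟨a1, ha1I, ha1F⟩ : ∃ a1 ∈ Set.Icc ((N : ℤ)) (3 * (N : ℤ) - 1), a1 ∉ FC := by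
        by_contra hno
        push_neg at hno
        have := Set.ncard_le_ncard hno hFCfin
        rw [hIccCcard, hFCN] at this
        omega
      have ha1Ic := Set.mem_Icc.1 ha1I
      have hptW : (a1, d0) ∈ W := by
        apply reach_horiz
        intro t ht1 ht2
        exact hrowA1 t (by omega) (by omega)
      have hptn : (a1, d0) ∉ FC ×ˢ Set.Icc (-(N : ℤ)) ((N : ℤ) - 1) := by
        rintro ⟨h1, _⟩
        exact ha1F h1
      have hins : insert (a1, d0) (FC ×ˢ Set.Icc (-(N : ℤ)) ((N : ℤ) - 1)) ⊆ W := by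
        rw [Set.insert_subset_iff]
        exact ⟨hptW, hT1sub⟩
      have hc := Set.ncard_le_ncard hins hWfin
      rw [Set.ncard_insert_of_notMem hptn (hFCfin.prod (Set.finite_Icc _ _)), hT1card, hFCN] at hc
      nlinarith
  -- C1 equals W
  have hC1W : C1 = W := by
    by_contra hne
    have hdisj : Disjoint C1 W := by
      rw [Set.disjoint_left]
      intro z hz1 hzW
      exact hne (comp_eq hC1 hWcomp hz1 hzW)
    have hsub : C1 ∪ W ⊆ box N (1, 0) :=
      Set.union_subset ((comp_subset hC1).trans Set.diff_subset)
        ((comp_subset hWcomp).trans Set.diff_subset)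
    have hcard := Set.ncard_le_ncard hsub hfin1
    rw [Set.ncard_union_eq hdisj (hA1fin.subset (comp_subset hC1)) hWfin, hbox1card] at hcard
    have hWle := hC1max W hWcomp
    have h4 : 4 * N * N = 2 * (N * N) + 2 * (N * N) := by ring
    omega
  have hFCinC0 : ∀ i, -(N : ℤ) ≤ i → i ≤ (N : ℤ) - 1 → (c0, i) ∈ C0 := by
    intro i h1 h2
    exact hC1C0 (hC1W ▸ hT1W c0 hc0 i h1 h2)
  -- the boundary set Γ and the bad region D
  set Γ : Set (ℤ × ℤ) :=
    {x ∈ box N (0, 0) ∪ box N (1, 0) | ξ x = 2 ∧ ∃ y ∈ C0, adjZ2 x y} with hΓdef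
  set D : Set (ℤ × ℤ) := (box N (0, 0) ∪ box N (1, 0)) \ C0 with hDdef
  have hΓfin : Γ.Finite := hfinU.subset (Set.sep_subset _ _)
  have hΓfinT := hΓfin.to_subtype
  have hDfin : D.Finite := hfinU.subset Set.diff_subset
  -- any point of D adjacent to C0 is a symbiont, hence in Γ
  have hkey : ∀ x ∈ D, ∀ y ∈ C0, adjZ2 x y → x ∈ Γ := by
    intro x hx y hy hadj
    have hξ : ξ x = 2 := by
      by_contra hξ
      have hxA : x ∈ (box N (0, 0) ∪ box N (1, 0)) \ Sset := ⟨hx.1, hξ⟩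
      have hxC0 : x ∈ C0 := by
        rw [hC0eq] at hy ⊢
        exact reach_step hy hxA (adjZ2_symm hadj)
      exact hx.2 hxC0
    exact ⟨hx.1, hξ, y, hy, hadj⟩
  set DB : Set (ℤ × ℤ) := D ∩ box N (0, 0) with hDBdef
  have hDBfin : DB.Finite := hfin0.subset Set.inter_subset_right
  have hS0DB : {x ∈ box N (0, 0) | ξ x = 2} ⊆ DB := by
    intro x hx
    exact ⟨⟨Or.inl hx.1, fun hC => (hC0subA hC).2 hx.2⟩, hx.1⟩
  have hK0DB : K0 ≤ DB.ncard := by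
    rw [← hK0]
    exact Set.ncard_le_ncard hS0DB hDBfin
  set Rs : Set ℤ := Prod.snd '' DB with hRsdef
  set Cs : Set ℤ := Prod.fst '' DB with hCsdef
  have hRsfin : Rs.Finite := hDBfin.image _
  have hCsfin : Cs.Finite := hDBfin.image _
  have hDBsub : DB ⊆ Cs ×ˢ Rs := fun x hx => ⟨⟨x, hx, rfl⟩, ⟨x, hx, rfl⟩⟩
  have hDBcard : DB.ncard ≤ Cs.ncard * Rs.ncard := by
    rw [← ncard_prodZ]
    exact Set.ncard_le_ncard hDBsub (hCsfin.prod hRsfin)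
  -- every row of DB contains a boundary symbiont
  have hrowΓ : ∀ i ∈ Rs, ∃ γ ∈ Γ, γ.2 = i := by
    rintro i ⟨⟨a, b⟩, hxDB, rfl⟩
    have hco := (mem_box0 _).1 hxDB.2
    simp only at hco
    have hC0pt : (c0, b) ∈ C0 := hFCinC0 b hco.2.2.1 hco.2.2.2
    have hbdd : ∃ u, ∀ t, ((t, b) ∈ D ∧ t < c0) → t ≤ u := ⟨c0, fun t ht => le_of_lt ht.2⟩
    have hex : ∃ t, (t, b) ∈ D ∧ t < c0 := ⟨a, hxDB.1, by omega⟩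
    obtain ⟨m, ⟨hmD, hmlt⟩, hmax⟩ := Int.exists_greatest_of_bdd hbdd hex
    have hmlb : -(N : ℤ) ≤ m := by
      rcases hmD.1 with h | h
      · exact ((mem_box0 _).1 h).1
      · have := ((mem_box1 _).1 h).1; omega
    have hm1U : (m + 1, b) ∈ box N (0, 0) ∪ box N (1, 0) := by
      rcases le_or_gt (m + 1) ((N : ℤ) - 1) with h | h
      · exact Or.inl ((mem_box0 _).2 ⟨by omega, h, hco.2.2.1, hco.2.2.2⟩)
      · exact Or.inr ((mem_box1 _).2 ⟨by omega, by omega, hco.2.2.1, hco.2.2.2⟩)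
    have hm1C0 : (m + 1, b) ∈ C0 := by
      rcases eq_or_lt_of_le (show m + 1 ≤ c0 by omega) with he | hlt
      · rw [he]; exact hC0pt
      · by_contra hno
        have := hmax (m + 1) ⟨⟨hm1U, hno⟩, hlt⟩
        omega
    exact ⟨(m, b), hkey _ hmD _ hm1C0 (adjZ2_horiz (by omega)), rfl⟩
  -- generic injection from an indexed family of boundary points
  have hinj : ∀ (S : Set ℤ) (proj : ℤ × ℤ → ℤ),
      (∀ i ∈ S, ∃ γ ∈ Γ, proj γ = i) → S.ncard ≤ Γ.ncard := by
    intro S proj hS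
    apply Set.ncard_le_ncard_of_injOn
      (fun i => if h : ∃ γ ∈ Γ, proj γ = i then h.choose else (0, 0))
    · intro i hi
      rw [dif_pos (hS i hi)]
      exact (hS i hi).choose_spec.1
    · intro a ha b hb hab
      dsimp only at hab
      rw [dif_pos (hS a ha), dif_pos (hS b hb)] at hab
      have h1 := (hS a ha).choose_spec.2
      have h2 := (hS b hb).choose_spec.2
      rw [← h1, ← h2, hab]
  have hRΓ : Rs.ncard ≤ Γ.ncard := hinj Rs Prod.snd hrowΓ
  -- column dichotomy
  have hcolΓ : ∀ j ∈ Cs, (∀ i, -(N : ℤ) ≤ i → i ≤ (N : ℤ) - 1 → (j, i) ∈ D) ∨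
      (∃ γ ∈ Γ, γ.1 = j) := by
    rintro j hj
    by_cases hfull : ∀ i, -(N : ℤ) ≤ i → i ≤ (N : ℤ) - 1 → (j, i) ∈ D
    · exact Or.inl hfull
    right
    push_neg at hfull
    obtain ⟨i0, hi01, hi02, hi0D⟩ := hfull
    obtain ⟨⟨a, i1⟩, hxDB, rfl⟩ := hj
    have hco := (mem_box0 _).1 hxDB.2
    simp only at hco ⊢
    have hxD : (a, i1) ∈ D := hxDB.1
    have hne : i1 ≠ i0 := by
      rintro rfl
      exact hi0D hxD
    rcases lt_or_gt_of_ne hne with hlt | hgt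
    · -- i1 < i0 : take the greatest m < i0 with (a, m) ∈ D
      have hbdd : ∃ u, ∀ t, ((a, t) ∈ D ∧ t < i0) → t ≤ u := ⟨i0, fun t ht => le_of_lt ht.2⟩
      have hex : ∃ t, (a, t) ∈ D ∧ t < i0 := ⟨i1, hxD, hlt⟩
      obtain ⟨m, ⟨hmD, hmlt⟩, hmax⟩ := Int.exists_greatest_of_bdd hbdd hex
      have hmlb : -(N : ℤ) ≤ m := by
        rcases hmD.1 with h | h
        · exact ((mem_box0 _).1 h).2.2.1
        · exact ((mem_box1 _).1 h).2.2.1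
      have hm1b : (a, m + 1) ∈ box N (0, 0) :=
        (mem_box0 _).2 ⟨hco.1, hco.2.1, by omega, by omega⟩
      have hm1C0 : (a, m + 1) ∈ C0 := by
        rcases eq_or_lt_of_le (show m + 1 ≤ i0 by omega) with he | hlt2
        · by_contra hno
          exact hi0D (he ▸ ⟨Or.inl hm1b, hno⟩)
        · by_contra hno
          have := hmax (m + 1) ⟨⟨Or.inl hm1b, hno⟩, hlt2⟩
          omega
      exact ⟨(a, m), hkey _ hmD _ hm1C0 (adjZ2_vert (by omega)), rfl⟩
    · -- i0 < i1 : take the least m > i0 with (a, m) ∈ D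
      have hbdd : ∃ u, ∀ t, ((a, t) ∈ D ∧ i0 < t) → u ≤ t := ⟨i0, fun t ht => le_of_lt ht.2⟩
      have hex : ∃ t, (a, t) ∈ D ∧ i0 < t := ⟨i1, hxD, hgt⟩
      obtain ⟨m, ⟨hmD, hmgt⟩, hmin⟩ := Int.exists_least_of_bdd hbdd hex
      have hmub : m ≤ (N : ℤ) - 1 := by
        rcases hmD.1 with h | h
        · exact ((mem_box0 _).1 h).2.2.2
        · exact ((mem_box1 _).1 h).2.2.2
      have hm1b : (a, m - 1) ∈ box N (0, 0) :=
        (mem_box0 _).2 ⟨hco.1, hco.2.1, by omega, by omega⟩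
      have hm1C0 : (a, m - 1) ∈ C0 := by
        rcases eq_or_lt_of_le (show i0 ≤ m - 1 by omega) with he | hlt2
        · by_contra hno
          exact hi0D (he ▸ ⟨Or.inl hm1b, hno⟩)
        · by_contra hno
          have := hmin (m - 1) ⟨⟨Or.inl hm1b, hno⟩, hlt2⟩
          omega
      exact ⟨(a, m), hkey _ hmD _ hm1C0 (adjZ2_vert (by omega)), rfl⟩
  have hCsIcc : Cs ⊆ Set.Icc (-(N : ℤ)) ((N : ℤ) - 1) := by
    rintro j ⟨x, hx, rfl⟩
    have hco := (mem_box0 _).1 hx.2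
    exact Set.mem_Icc.2 ⟨hco.1, hco.2.1⟩
  have hCsΓ : Cs.ncard ≤ Γ.ncard := by
    by_cases hf : ∃ j ∈ Cs, ∀ i, -(N : ℤ) ≤ i → i ≤ (N : ℤ) - 1 → (j, i) ∈ D
    · obtain ⟨j0, hj0, hfull⟩ := hf
      have hj0r := Set.mem_Icc.1 (hCsIcc hj0)
      have hIccR : Set.Icc (-(N : ℤ)) ((N : ℤ) - 1) ⊆ Rs := by
        intro i hi
        rw [Set.mem_Icc] at hi
        exact ⟨(j0, i), ⟨hfull i hi.1 hi.2,
          (mem_box0 _).2 ⟨hj0r.1, hj0r.2, hi.1, hi.2⟩⟩, rfl⟩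
      calc Cs.ncard ≤ (Set.Icc (-(N : ℤ)) ((N : ℤ) - 1)).ncard :=
            Set.ncard_le_ncard hCsIcc (Set.finite_Icc _ _)
        _ ≤ Rs.ncard := Set.ncard_le_ncard hIccR hRsfin
        _ ≤ Γ.ncard := hRΓ
    · exact hinj Cs Prod.fst (fun j hj => (hcolΓ j hj).resolve_left
        (fun hfull => hf ⟨j, hj, hfull⟩))
  have hfinal : K0 ≤ Γ.ncard * Γ.ncard :=
    le_trans hK0DB (le_trans hDBcard (Nat.mul_le_mul hCsΓ hRΓ))
  have hcast : (K0 : ℝ) ≤ ((Γ.ncard : ℝ)) ^ 2 := by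
    have : (K0 : ℝ) ≤ ((Γ.ncard * Γ.ncard : ℕ) : ℝ) := by exact_mod_cast hfinal
    calc (K0 : ℝ) ≤ ((Γ.ncard * Γ.ncard : ℕ) : ℝ) := this
      _ = (Γ.ncard : ℝ) ^ 2 := by push_cast; ring
  calc Real.sqrt K0 ≤ Real.sqrt ((Γ.ncard : ℝ) ^ 2) := Real.sqrt_le_sqrt hcast
    _ = (Γ.ncard : ℝ) := Real.sqrt_sq (by positivity)
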